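/- The operators π'(α*) and π'(β), defined on the algebraic span of the basis of 𝓗 by the explicit formulas involving the matrices a±_{nij} and b±_{nij}, extend to bounded operators on 𝓗. -/

import Mathlib

noncomputable section

open Real

/-- The q-number `[m] = (q^m - q^(-m))/(q - q⁻¹)`. -/
def qnum (q m : ℝ) : ℝ := (q ^ m - q ^ (-m)) / (q - q⁻¹)

/-- The 2×2 matrix `a⁺_{nij}`. -/
def aP (q n i j : ℝ) : Matrix (Fin 2) (Fin 2) ℝ :=
  (q ^ ((i + j - 1/2) / 2) * Real.sqrt (qnum q (n + i + 1))) •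
    !![q ^ (-n - 1/2) * Real.sqrt (qnum q (n + j + 3/2)) / qnum q (2*n + 2), 0;
       q ^ ((1:ℝ)/2) * Real.sqrt (qnum q (n - j + 1/2)) / (qnum q (2*n + 1) * qnum q (2*n + 2)),
       q ^ (-n) * Real.sqrt (qnum q (n + j + 1/2)) / qnum q (2*n + 1)]

/-- The 2×2 matrix `a⁻_{nij}`. -/
def aM (q n i j : ℝ) : Matrix (Fin 2) (Fin 2) ℝ :=
  (q ^ ((i + j - 1/2) / 2) * Real.sqrt (qnum q (n - i))) •
    !![q ^ (n + 1) * Real.sqrt (qnum q (n - j + 1/2)) / qnum q (2*n + 1),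
       -(q ^ ((1:ℝ)/2) * Real.sqrt (qnum q (n + j + 1/2)) / (qnum q (2*n) * qnum q (2*n + 1)));
       0, q ^ (n + 1/2) * Real.sqrt (qnum q (n - j - 1/2)) / qnum q (2*n)]

/-- The 2×2 matrix `b⁺_{nij}`. -/
def bP (q n i j : ℝ) : Matrix (Fin 2) (Fin 2) ℝ :=
  (q ^ ((i + j - 1/2) / 2) * Real.sqrt (qnum q (n + i + 1))) •
    !![Real.sqrt (qnum q (n - j + 3/2)) / qnum q (2*n + 2), 0;
       -(q ^ (-n - 1) * Real.sqrt (qnum q (n + j + 1/2)) / (qnum q (2*n + 1) * qnum q (2*n + 2))),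
       q ^ (-(1:ℝ)/2) * Real.sqrt (qnum q (n - j + 1/2)) / qnum q (2*n + 1)]

/-- The 2×2 matrix `b⁻_{nij}`. -/
def bM (q n i j : ℝ) : Matrix (Fin 2) (Fin 2) ℝ :=
  (q ^ ((i + j - 1/2) / 2) * Real.sqrt (qnum q (n - i))) •
    !![-(q ^ (-(1:ℝ)/2) * Real.sqrt (qnum q (n + j + 1/2)) / qnum q (2*n + 1)),
       -(q ^ n * Real.sqrt (qnum q (n - j + 1/2)) / (qnum q (2*n) * qnum q (2*n + 1)));
       0, -(Real.sqrt (qnum q (n + j - 1/2)) / qnum q (2*n))]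

/-- `n` is a nonnegative half-integer: `n ∈ ½ℤ₊ = {0, 1/2, 1, 3/2, …}`. -/
def HalfNat (n : ℝ) : Prop := ∃ N : ℕ, (N : ℝ) = 2 * n

/-- `i ∈ {-n, -n+1, …, n}`. -/
def IdxRange (n i : ℝ) : Prop := (∃ k : ℕ, (k : ℝ) = i + n) ∧ i ≤ n

/-- `j ∈ {-n+1/2, -n+3/2, …, n-1/2}`. -/
def JRangeIn (n j : ℝ) : Prop := (∃ k : ℕ, (k : ℝ) = j + n - 1/2) ∧ j ≤ n - 1/2

/-- `j ∈ {-n-1/2, -n+1/2, …, n+1/2}`. -/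
def JRangeOut (n j : ℝ) : Prop := (∃ k : ℕ, (k : ℝ) = j + n + 1/2) ∧ j ≤ n + 1/2

/-- Validity of an index triple `(N, I, J)` (with `n = N/2`, `i = I/2`, `j = J/2`) for the basis
vectors `u^n_{ij}` of `𝓗`: `n ∈ ½ℤ₊`, `i ∈ {-n, …, n}`, `j ∈ {-n-1/2, …, n+1/2}`. -/
abbrev validU (x : ℤ × ℤ × ℤ) : Prop :=
  0 ≤ x.1 ∧ |x.2.1| ≤ x.1 ∧ (x.1 + x.2.1) % 2 = 0 ∧
    |x.2.2| ≤ x.1 + 1 ∧ (x.1 + 1 + x.2.2) % 2 = 0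

/-- Validity of an index triple `(N, I, J)` (with `n = N/2`, `i = I/2`, `j = J/2`) for the basis
vectors `d^n_{ij}` of `𝓗`: `n ≥ 1/2`, `i ∈ {-n, …, n}`, `j ∈ {-n+1/2, …, n-1/2}`. -/
abbrev validD (x : ℤ × ℤ × ℤ) : Prop :=
  1 ≤ x.1 ∧ |x.2.1| ≤ x.1 ∧ (x.1 + x.2.1) % 2 = 0 ∧
    |x.2.2| ≤ x.1 - 1 ∧ (x.1 + 1 + x.2.2) % 2 = 0

abbrev IdxW : Type := {x : ℤ × ℤ × ℤ // validU x} ⊕ {x : ℤ × ℤ × ℤ // validD x}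

/-- The Hilbert space `𝓗` with orthonormal basis `{u^n_{ij}} ∪ {d^n_{ij}}`. -/
abbrev Wsp : Type := lp (fun _ : IdxW => ℂ) 2

/-- The basis vector `u^n_{ij}` of `𝓗` (zero if out of range). -/
def eU (N I J : ℤ) : Wsp :=
  if h : validU (N, I, J) then lp.single 2 (Sum.inl ⟨(N, I, J), h⟩ : IdxW) (1 : ℂ) else 0

/-- The basis vector `d^n_{ij}` of `𝓗` (zero if out of range, in particular for
`j = ±(n+1/2)`). -/
def eD (N I J : ℤ) : Wsp :=
  if h : validD (N, I, J) then lp.single 2 (Sum.inr ⟨(N, I, J), h⟩ : IdxW) (1 : ℂ) else 0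

/-- the half-integer `N/2` as a real number -/
def nn (N : ℤ) : ℝ := (N : ℝ) / 2

/-- `P` acts on the basis vectors of `𝓗` by the defining formula of `π'(α*)`:
`π'(α*) v^n_{ij} = a⁺_{nij} v^(n+1/2)_{i+1/2,j+1/2} + a⁻_{nij} v^(n-1/2)_{i+1/2,j+1/2}`,
where `v^n_{ij} = (u^n_{ij}, d^n_{ij})` and a matrix `M` applied to the source pair gives the
coefficient `M₁₁u + M₁₂d` of the target `u`-vector and `M₂₁u + M₂₂d` of the target `d`-vector. -/
def IsPiAlphaStar (q : ℝ) (P : Wsp →L[ℂ] Wsp) : Prop :=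
  (∀ N I J : ℤ, validU (N, I, J) →
    P (eU N I J) =
      (aP q (nn N) (nn I) (nn J) 0 0 : ℂ) • eU (N + 1) (I + 1) (J + 1)
      + (aP q (nn N) (nn I) (nn J) 1 0 : ℂ) • eD (N + 1) (I + 1) (J + 1)
      + (aM q (nn N) (nn I) (nn J) 0 0 : ℂ) • eU (N - 1) (I + 1) (J + 1)
      + (aM q (nn N) (nn I) (nn J) 1 0 : ℂ) • eD (N - 1) (I + 1) (J + 1)) ∧
  (∀ N I J : ℤ, validD (N, I, J) →
    P (eD N I J) =
      (aP q (nn N) (nn I) (nn J) 0 1 : ℂ) • eU (N + 1) (I + 1) (J + 1)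
      + (aP q (nn N) (nn I) (nn J) 1 1 : ℂ) • eD (N + 1) (I + 1) (J + 1)
      + (aM q (nn N) (nn I) (nn J) 0 1 : ℂ) • eU (N - 1) (I + 1) (J + 1)
      + (aM q (nn N) (nn I) (nn J) 1 1 : ℂ) • eD (N - 1) (I + 1) (J + 1))

/-- `P` acts on the basis vectors of `𝓗` by the defining formula of `π'(β)`:
`π'(β) v^n_{ij} = -(b⁺_{nij} v^(n+1/2)_{i+1/2,j-1/2} + b⁻_{nij} v^(n-1/2)_{i+1/2,j-1/2})`. -/
def IsPiBeta (q : ℝ) (P : Wsp →L[ℂ] Wsp) : Prop :=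
  (∀ N I J : ℤ, validU (N, I, J) →
    P (eU N I J) =
      (-(bP q (nn N) (nn I) (nn J) 0 0) : ℂ) • eU (N + 1) (I + 1) (J - 1)
      + (-(bP q (nn N) (nn I) (nn J) 1 0) : ℂ) • eD (N + 1) (I + 1) (J - 1)
      + (-(bM q (nn N) (nn I) (nn J) 0 0) : ℂ) • eU (N - 1) (I + 1) (J - 1)
      + (-(bM q (nn N) (nn I) (nn J) 1 0) : ℂ) • eD (N - 1) (I + 1) (J - 1)) ∧
  (∀ N I J : ℤ, validD (N, I, J) →
    P (eD N I J) =
      (-(bP q (nn N) (nn I) (nn J) 0 1) : ℂ) • eU (N + 1) (I + 1) (J - 1)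
      + (-(bP q (nn N) (nn I) (nn J) 1 1) : ℂ) • eD (N + 1) (I + 1) (J - 1)
      + (-(bM q (nn N) (nn I) (nn J) 0 1) : ℂ) • eU (N - 1) (I + 1) (J - 1)
      + (-(bM q (nn N) (nn I) (nn J) 1 1) : ℂ) • eD (N - 1) (I + 1) (J - 1))

/-! ### Auxiliary analytic lemmas -/

section QAnalysis

variable {q : ℝ}

lemma hqne (hq0 : 0 < q) (hq1 : q < 1) : q - q⁻¹ ≠ 0 := by
  have h1 : 1 < q⁻¹ := (one_lt_inv₀ hq0).mpr hq1
  intro h; nlinarith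

lemma hq2 (hq0 : 0 < q) (hq1 : q < 1) : 0 < 1 - q^2 := by nlinarith

lemma qnum_eq (hq0 : 0 < q) (hq1 : q < 1) (m : ℝ) :
    qnum q m = (q ^ (1-m) - q ^ (1+m)) / (1 - q^2) := by
  have h1 : q ^ (1-m) = q * q ^ (-m) := by
    rw [show (1-m) = 1 + (-m) by ring, Real.rpow_add hq0, Real.rpow_one]
  have h2 : q ^ (1+m) = q * q ^ m := by
    rw [Real.rpow_add hq0, Real.rpow_one]
  rw [qnum, h1, h2]
  rw [div_eq_div_iff (hqne hq0 hq1) (ne_of_gt (hq2 hq0 hq1))]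
  field_simp
  ring

lemma qnum_one (hq0 : 0 < q) (hq1 : q < 1) : qnum q 1 = 1 := by
  rw [qnum_eq hq0 hq1]
  norm_num
  exact ne_of_gt (hq2 hq0 hq1)

lemma qnum_ge (hq0 : 0 < q) (hq1 : q < 1) {d : ℝ} (hd : 1 ≤ d) :
    q ^ (1 - d) ≤ qnum q d := by
  rw [qnum_eq hq0 hq1, le_div_iff₀ (hq2 hq0 hq1)]
  have h1 : q ^ (1+d) = q ^ (1-d) * q ^ (2*d) := by
    rw [← Real.rpow_add hq0]; ring_nf
  have h2 : q ^ (2*d) ≤ q ^ (2:ℝ) := Real.rpow_le_rpow_of_exponent_ge hq0 hq1.le (by linarith)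
  have h3 : q ^ (2:ℝ) = q ^ 2 := by
    rw [show ((2:ℝ)) = ((2:ℕ):ℝ) by norm_num, Real.rpow_natCast]
  have h4 : (0:ℝ) < q ^ (1-d) := Real.rpow_pos_of_pos hq0 _
  have h5 : q ^ (1-d) * q ^ (2*d) ≤ q ^ (1-d) * q ^ 2 :=
    mul_le_mul_of_nonneg_left (h2.trans_eq h3) h4.le
  nlinarith [h5, h1]

lemma qnum_pos (hq0 : 0 < q) (hq1 : q < 1) {d : ℝ} (hd : 1 ≤ d) : 0 < qnum q d :=
  lt_of_lt_of_le (Real.rpow_pos_of_pos hq0 _) (qnum_ge hq0 hq1 hd)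

lemma sqrt_qnum_le (hq0 : 0 < q) (hq1 : q < 1) (A : ℝ) :
    Real.sqrt (qnum q A) ≤ q ^ ((1-A)/2) / Real.sqrt (1 - q^2) := by
  rcases le_or_gt 0 A with hA | hA
  · have hub : qnum q A ≤ q ^ (1-A) / (1 - q^2) := by
      rw [qnum_eq hq0 hq1]
      have hp : 0 < q ^ (1+A) := Real.rpow_pos_of_pos hq0 _
      gcongr
      · exact (hq2 hq0 hq1).le
      · linarith
    calc Real.sqrt (qnum q A) ≤ Real.sqrt (q ^ (1-A) / (1 - q^2)) := Real.sqrt_le_sqrt hub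
      _ = q ^ ((1-A)/2) / Real.sqrt (1 - q^2) := by
          rw [Real.sqrt_div (Real.rpow_pos_of_pos hq0 _).le]
          congr 1
          rw [Real.sqrt_eq_rpow, ← Real.rpow_mul hq0.le]
          ring_nf
  · have hle : qnum q A ≤ 0 := by
      rw [qnum_eq hq0 hq1]
      apply div_nonpos_of_nonpos_of_nonneg ?_ (hq2 hq0 hq1).le
      have := Real.rpow_le_rpow_of_exponent_ge hq0 hq1.le (show 1+A ≤ 1-A by linarith)
      linarith
    rw [Real.sqrt_eq_zero'.mpr hle]
    positivity

/-- the uniform bound constant -/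
def Cb (q : ℝ) : ℝ := q ^ (-1:ℝ) / (1 - q^2)

lemma Cb_pos (hq0 : 0 < q) (hq1 : q < 1) : 0 < Cb q :=
  div_pos (Real.rpow_pos_of_pos hq0 _) (hq2 hq0 hq1)

lemma master (hq0 : 0 < q) (hq1 : q < 1) {x₁ x₂ : ℝ} (E1 E2 A B d1 d2 : ℝ)
    (hd1 : 1 ≤ d1) (hd2 : 1 ≤ d2)
    (hS : -1 ≤ E1 + E2 + (1-A)/2 + (1-B)/2 + (d1-1) + (d2-1))
    (hx1 : x₁ = q ^ E1 * Real.sqrt (qnum q A))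
    (hx2 : x₂ = q ^ E2 * Real.sqrt (qnum q B) / (qnum q d1 * qnum q d2)) :
    |x₁ * x₂| ≤ Cb q := by
  have hs : 0 < Real.sqrt (1 - q^2) := Real.sqrt_pos.mpr (hq2 hq0 hq1)
  have hss : Real.sqrt (1 - q^2) * Real.sqrt (1 - q^2) = 1 - q^2 :=
    Real.mul_self_sqrt (hq2 hq0 hq1).le
  have hD1 := qnum_pos hq0 hq1 hd1
  have hD2 := qnum_pos hq0 hq1 hd2
  have hP1 : (0:ℝ) < q ^ (1-d1) := Real.rpow_pos_of_pos hq0 _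
  have hP2 : (0:ℝ) < q ^ (1-d2) := Real.rpow_pos_of_pos hq0 _
  have habs : |x₁ * x₂| = (q ^ E1 * Real.sqrt (qnum q A)) * (q ^ E2 * Real.sqrt (qnum q B))
      / (qnum q d1 * qnum q d2) := by
    rw [hx1, hx2, abs_of_nonneg (by positivity)]
    ring
  rw [habs]
  calc (q ^ E1 * Real.sqrt (qnum q A)) * (q ^ E2 * Real.sqrt (qnum q B))
      / (qnum q d1 * qnum q d2)
      ≤ (q ^ E1 * (q ^ ((1-A)/2) / Real.sqrt (1 - q^2)))
          * (q ^ E2 * (q ^ ((1-B)/2) / Real.sqrt (1 - q^2)))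
        / (q ^ (1-d1) * q ^ (1-d2)) := by
        gcongr <;> first
          | positivity
          | exact sqrt_qnum_le hq0 hq1 _
          | exact qnum_ge hq0 hq1 hd1
          | exact qnum_ge hq0 hq1 hd2
    _ = q ^ (E1 + E2 + (1-A)/2 + (1-B)/2 + (d1-1) + (d2-1)) / (1 - q^2) := by
        have e1 : q ^ (E1 + E2 + (1-A)/2 + (1-B)/2 + (d1-1) + (d2-1))
            = q^E1 * q^E2 * q^((1-A)/2) * q^((1-B)/2) * q^(d1-1) * q^(d2-1) := by
          rw [Real.rpow_add hq0, Real.rpow_add hq0, Real.rpow_add hq0, Real.rpow_add hq0,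
            Real.rpow_add hq0]
        have eP1 : q ^ (d1-1) = (q ^ (1-d1))⁻¹ := by
          rw [show (d1-1) = -(1-d1) by ring, Real.rpow_neg hq0.le]
        have eP2 : q ^ (d2-1) = (q ^ (1-d2))⁻¹ := by
          rw [show (d2-1) = -(1-d2) by ring, Real.rpow_neg hq0.le]
        rw [e1, eP1, eP2, ← hss]
        field_simp
        ring_nf
        rw [Real.sqrt_sq (Real.sqrt_nonneg _)]
    _ ≤ Cb q := by
        rw [Cb]
        exact div_le_div₀ (Real.rpow_pos_of_pos hq0 _).le
          (Real.rpow_le_rpow_of_exponent_ge hq0 hq1.le hS) (hq2 hq0 hq1) le_rfl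

end QAnalysis

/-! ### A generic bounded weighted-shift operator on `lp _ 2` -/

section Shift

variable {ι : Type*} [DecidableEq ι]

open Classical in
/-- partial inverse of the partial map `g` -/
def hInv (g : ι → Option ι) (y : ι) : Option ι :=
  if hy : ∃ x, g x = some y then some hy.choose else none

lemma hInv_eq_some {g : ι → Option ι} {x y : ι} (h : hInv g y = some x) : g x = some y := by
  classical
  unfold hInv at h
  split_ifs at h with hy
  · cases h; exact hy.choose_spec

lemma hInv_of_g {g : ι → Option ι}
    (hinj : ∀ x x' y, g x = some y → g x' = some y → x = x')
    {x y : ι} (h : g x = some y) : hInv g y = some x := by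
  classical
  unfold hInv
  rw [dif_pos ⟨x, h⟩]
  exact congrArg some (hinj _ _ _ (⟨x, h⟩ : ∃ x, g x = some y).choose_spec h)

lemma sum_hInv (g : ι → Option ι) (G : ι → ℝ) (s : Finset ι) :
    ∑ y ∈ s, Option.elim (hInv g y) 0 G
      = ∑ x ∈ s.biUnion (fun y => (hInv g y).toFinset), G x := by
  rw [Finset.sum_biUnion]
  · apply Finset.sum_congr rfl
    intro y _
    cases h : hInv g y <;> simp [h]
  · intro y _ y' _ hne
    simp only [Function.onFun]
    rw [Finset.disjoint_left]
    intro a ha ha'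
    rw [Option.mem_toFinset, Option.mem_def] at ha ha'
    have h1 := hInv_eq_some ha
    have h2 := hInv_eq_some ha'
    rw [h1] at h2
    exact hne (Option.some_injective _ h2)

variable (w : ι → ℂ) (g : ι → Option ι)

def TfunRaw (f : ι → ℂ) (y : ι) : ℂ := Option.elim (hInv g y) 0 (fun x => w x * f x)

lemma Tfun_sum_le {C : ℝ} (hC : 0 ≤ C) (hw : ∀ x, ‖w x‖ ≤ C)
    (f : lp (fun _ : ι => ℂ) 2) (s : Finset ι) :
    ∑ y ∈ s, ‖TfunRaw w g (⇑f) y‖ ^ (2:ℝ) ≤ (C * ‖f‖) ^ (2:ℝ) := by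
  have h1 : ∀ y, ‖TfunRaw w g (⇑f) y‖ ^ (2:ℝ)
      = Option.elim (hInv g y) 0 (fun x => ‖w x * f x‖ ^ (2:ℝ)) := by
    intro y
    unfold TfunRaw
    cases hInv g y <;> simp [Real.zero_rpow]
  set t := s.biUnion (fun y => (hInv g y).toFinset) with ht
  calc ∑ y ∈ s, ‖TfunRaw w g (⇑f) y‖ ^ (2:ℝ)
      = ∑ x ∈ t, ‖w x * f x‖ ^ (2:ℝ) := by
        simp_rw [h1]; exact sum_hInv g _ s
    _ ≤ ∑ x ∈ t, C ^ (2:ℝ) * ‖f x‖ ^ (2:ℝ) := by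
        apply Finset.sum_le_sum
        intro x _
        rw [← Real.mul_rpow hC (norm_nonneg _)]
        apply Real.rpow_le_rpow (norm_nonneg _) ?_ (by norm_num)
        rw [norm_mul]
        exact mul_le_mul_of_nonneg_right (hw x) (norm_nonneg _)
    _ = C ^ (2:ℝ) * ∑ x ∈ t, ‖f x‖ ^ (2:ℝ) := by rw [Finset.mul_sum]
    _ ≤ C ^ (2:ℝ) * ‖f‖ ^ (2:ℝ) := by
        apply mul_le_mul_of_nonneg_left ?_ (Real.rpow_nonneg hC _)
        have := lp.sum_rpow_le_norm_rpow (p := 2) (by norm_num) f t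
        simpa using this
    _ = (C * ‖f‖) ^ (2:ℝ) := (Real.mul_rpow hC (norm_nonneg f)).symm

lemma Tfun_mem {C : ℝ} (hC : 0 ≤ C) (hw : ∀ x, ‖w x‖ ≤ C) (f : lp (fun _ : ι => ℂ) 2) :
    Memℓp (TfunRaw w g (⇑f)) 2 := by
  apply memℓp_gen' (C := (C * ‖f‖) ^ (2:ℝ))
  intro s
  have := Tfun_sum_le w g hC hw f s
  simpa using this

def Tlin {C : ℝ} (hC : 0 ≤ C) (hw : ∀ x, ‖w x‖ ≤ C) :
    lp (fun _ : ι => ℂ) 2 →ₗ[ℂ] lp (fun _ : ι => ℂ) 2 where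
  toFun f := ⟨TfunRaw w g (⇑f), Tfun_mem w g hC hw f⟩
  map_add' f f' := by
    apply lp.ext
    funext y
    have : (⇑(f + f') : ι → ℂ) = ⇑f + ⇑f' := lp.coeFn_add f f'
    show TfunRaw w g (⇑(f + f')) y = TfunRaw w g (⇑f) y + TfunRaw w g (⇑f') y
    rw [this]
    unfold TfunRaw
    cases hInv g y <;> simp <;> ring
  map_smul' c f := by
    apply lp.ext
    funext y
    have : (⇑(c • f) : ι → ℂ) = c • ⇑f := lp.coeFn_smul c f
    show TfunRaw w g (⇑(c • f)) y = c * TfunRaw w g (⇑f) y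
    rw [this]
    unfold TfunRaw
    cases hInv g y <;> simp <;> ring

def ShiftOp {C : ℝ} (hC : 0 ≤ C) (hw : ∀ x, ‖w x‖ ≤ C) :
    lp (fun _ : ι => ℂ) 2 →L[ℂ] lp (fun _ : ι => ℂ) 2 :=
  (Tlin w g hC hw).mkContinuous C (fun f => by
    apply lp.norm_le_of_forall_sum_le (by norm_num) (mul_nonneg hC (norm_nonneg f))
    intro s
    have := Tfun_sum_le w g hC hw f s
    show ∑ y ∈ s, ‖TfunRaw w g (⇑f) y‖ ^ _ ≤ _
    simpa using this)

theorem ShiftOp_single {C : ℝ} (hC : 0 ≤ C) (hw : ∀ x, ‖w x‖ ≤ C)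
    (hinj : ∀ x x' y, g x = some y → g x' = some y → x = x') (x : ι) :
    ShiftOp w g hC hw (lp.single 2 x 1)
      = w x • Option.elim (g x) 0 (fun t => lp.single 2 t (1:ℂ)) := by
  apply lp.ext
  funext y
  rw [ShiftOp, LinearMap.mkContinuous_apply]
  show TfunRaw w g (⇑(lp.single 2 x (1:ℂ))) y = _
  rw [lp.coeFn_smul, Pi.smul_apply]
  rcases hgx : g x with _ | t
  · simp only [Option.elim]
    cases hy : hInv g y with
    | none => simp [TfunRaw, hy]
    | some x' =>
      have hx' := hInv_eq_some hy
      have hne : x' ≠ x := by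
        intro h; rw [h, hgx] at hx'; cases hx'
      simp [TfunRaw, hy, lp.single_apply, hne]
  · have ht : hInv g t = some x := hInv_of_g hinj hgx
    simp only [Option.elim]
    cases hy : hInv g y with
    | none =>
      have hyt : y ≠ t := by
        intro h; rw [h, ht] at hy; cases hy
      simp [TfunRaw, hy, lp.single_apply, hyt]
    | some x' =>
      have hx' := hInv_eq_some hy
      by_cases hxx : x' = x
      · subst hxx
        rw [hgx] at hx'
        have hyt : y = t := by cases hx'; rfl
        subst hyt
        simp [TfunRaw, hy, lp.single_apply]
      · have hyt : y ≠ t := by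
          intro h; subst h; rw [ht] at hy; cases hy; exact hxx rfl
        have hne : x' ≠ x := hxx
        simp [TfunRaw, hy, lp.single_apply, hyt, hne]

end Shift
/-! ### Index bookkeeping -/

lemma validU_real {N I J : ℤ} (h : validU (N, I, J)) :
    0 ≤ nn N ∧ -nn N ≤ nn I ∧ nn I ≤ nn N ∧ -nn N - 1/2 ≤ nn J ∧ nn J ≤ nn N + 1/2 := by
  obtain ⟨h1, h2, -, h4, -⟩ := h
  rw [abs_le] at h2 h4
  have e0 : (0:ℝ) ≤ (N:ℝ) := by exact_mod_cast h1
  have e1 : (-(N:ℝ)) ≤ (I:ℝ) := by exact_mod_cast h2.1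
  have e2 : ((I:ℝ)) ≤ (N:ℝ) := by exact_mod_cast h2.2
  have e3 : (-((N:ℝ)+1)) ≤ (J:ℝ) := by exact_mod_cast h4.1
  have e4 : ((J:ℝ)) ≤ (N:ℝ)+1 := by exact_mod_cast h4.2
  unfold nn
  refine ⟨by linarith, by linarith, by linarith, by linarith, by linarith⟩

lemma validD_real {N I J : ℤ} (h : validD (N, I, J)) :
    1/2 ≤ nn N ∧ -nn N ≤ nn I ∧ nn I ≤ nn N ∧ -nn N + 1/2 ≤ nn J ∧ nn J ≤ nn N - 1/2 := by
  obtain ⟨h1, h2, -, h4, -⟩ := h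
  rw [abs_le] at h2 h4
  have e0 : (1:ℝ) ≤ (N:ℝ) := by exact_mod_cast h1
  have e1 : (-(N:ℝ)) ≤ (I:ℝ) := by exact_mod_cast h2.1
  have e2 : ((I:ℝ)) ≤ (N:ℝ) := by exact_mod_cast h2.2
  have e3 : (-((N:ℝ)-1)) ≤ (J:ℝ) := by exact_mod_cast h4.1
  have e4 : ((J:ℝ)) ≤ (N:ℝ)-1 := by exact_mod_cast h4.2
  unfold nn
  refine ⟨by linarith, by linarith, by linarith, by linarith, by linarith⟩

/-! ### the partial shift maps -/

def gUU (a c : ℤ) : IdxW → Option IdxW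
  | Sum.inl ⟨(N, I, J), _⟩ =>
      if h : validU (N + a, I + 1, J + c) then some (Sum.inl ⟨(N + a, I + 1, J + c), h⟩) else none
  | Sum.inr _ => none

def gUD (a c : ℤ) : IdxW → Option IdxW
  | Sum.inl ⟨(N, I, J), _⟩ =>
      if h : validD (N + a, I + 1, J + c) then some (Sum.inr ⟨(N + a, I + 1, J + c), h⟩) else none
  | Sum.inr _ => none

def gDU (a c : ℤ) : IdxW → Option IdxW
  | Sum.inr ⟨(N, I, J), _⟩ =>
      if h : validU (N + a, I + 1, J + c) then some (Sum.inl ⟨(N + a, I + 1, J + c), h⟩) else none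
  | Sum.inl _ => none

def gDD (a c : ℤ) : IdxW → Option IdxW
  | Sum.inr ⟨(N, I, J), _⟩ =>
      if h : validD (N + a, I + 1, J + c) then some (Sum.inr ⟨(N + a, I + 1, J + c), h⟩) else none
  | Sum.inl _ => none

lemma gUU_inj (a c : ℤ) : ∀ x x' y, gUU a c x = some y → gUU a c x' = some y → x = x' := by
  rintro (⟨⟨N, I, J⟩, hv⟩ | s) x' y hx hx'
  case inr => simp [gUU] at hx
  rcases x' with ⟨⟨N', I', J'⟩, hv'⟩ | s'
  case inr => simp [gUU] at hx'
  simp only [gUU] at hx hx'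
  have c1 : validU (N + a, I + 1, J + c) := by
    by_contra hc; rw [dif_neg hc] at hx; cases hx
  rw [dif_pos c1] at hx
  have c2 : validU (N' + a, I' + 1, J' + c) := by
    by_contra hc; rw [dif_neg hc] at hx'; cases hx'
  rw [dif_pos c2] at hx'
  rw [← hx'] at hx
  simp only [Option.some.injEq, Sum.inl.injEq, Subtype.mk.injEq, Prod.mk.injEq] at hx
  simp only [Sum.inl.injEq, Subtype.mk.injEq, Prod.mk.injEq]
  omega

lemma gUD_inj (a c : ℤ) : ∀ x x' y, gUD a c x = some y → gUD a c x' = some y → x = x' := by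
  rintro (⟨⟨N, I, J⟩, hv⟩ | s) x' y hx hx'
  case inr => simp [gUD] at hx
  rcases x' with ⟨⟨N', I', J'⟩, hv'⟩ | s'
  case inr => simp [gUD] at hx'
  simp only [gUD] at hx hx'
  have c1 : validD (N + a, I + 1, J + c) := by
    by_contra hc; rw [dif_neg hc] at hx; cases hx
  rw [dif_pos c1] at hx
  have c2 : validD (N' + a, I' + 1, J' + c) := by
    by_contra hc; rw [dif_neg hc] at hx'; cases hx'
  rw [dif_pos c2] at hx'
  rw [← hx'] at hx
  simp only [Option.some.injEq, Sum.inr.injEq, Subtype.mk.injEq, Prod.mk.injEq] at hx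
  simp only [Sum.inl.injEq, Subtype.mk.injEq, Prod.mk.injEq]
  omega

lemma gDU_inj (a c : ℤ) : ∀ x x' y, gDU a c x = some y → gDU a c x' = some y → x = x' := by
  rintro (s | ⟨⟨N, I, J⟩, hv⟩) x' y hx hx'
  case inl => simp [gDU] at hx
  rcases x' with s' | ⟨⟨N', I', J'⟩, hv'⟩
  case inl => simp [gDU] at hx'
  simp only [gDU] at hx hx'
  have c1 : validU (N + a, I + 1, J + c) := by
    by_contra hc; rw [dif_neg hc] at hx; cases hx
  rw [dif_pos c1] at hx
  have c2 : validU (N' + a, I' + 1, J' + c) := by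
    by_contra hc; rw [dif_neg hc] at hx'; cases hx'
  rw [dif_pos c2] at hx'
  rw [← hx'] at hx
  simp only [Option.some.injEq, Sum.inl.injEq, Subtype.mk.injEq, Prod.mk.injEq] at hx
  simp only [Sum.inr.injEq, Subtype.mk.injEq, Prod.mk.injEq]
  omega

lemma gDD_inj (a c : ℤ) : ∀ x x' y, gDD a c x = some y → gDD a c x' = some y → x = x' := by
  rintro (s | ⟨⟨N, I, J⟩, hv⟩) x' y hx hx'
  case inl => simp [gDD] at hx
  rcases x' with s' | ⟨⟨N', I', J'⟩, hv'⟩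
  case inl => simp [gDD] at hx'
  simp only [gDD] at hx hx'
  have c1 : validD (N + a, I + 1, J + c) := by
    by_contra hc; rw [dif_neg hc] at hx; cases hx
  rw [dif_pos c1] at hx
  have c2 : validD (N' + a, I' + 1, J' + c) := by
    by_contra hc; rw [dif_neg hc] at hx'; cases hx'
  rw [dif_pos c2] at hx'
  rw [← hx'] at hx
  simp only [Option.some.injEq, Sum.inr.injEq, Subtype.mk.injEq, Prod.mk.injEq] at hx
  simp only [Sum.inr.injEq, Subtype.mk.injEq, Prod.mk.injEq]
  omega

lemma gUU_elim (a c N I J : ℤ) (hv : validU (N, I, J)) :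
    Option.elim (gUU a c (Sum.inl ⟨(N, I, J), hv⟩)) 0 (fun y => lp.single 2 y (1:ℂ))
      = eU (N + a) (I + 1) (J + c) := by
  show Option.elim (if h : validU (N + a, I + 1, J + c)
      then some (Sum.inl ⟨(N + a, I + 1, J + c), h⟩ : IdxW) else none) 0 _ = _
  rw [eU]
  split_ifs with h <;> simp

lemma gUD_elim (a c N I J : ℤ) (hv : validU (N, I, J)) :
    Option.elim (gUD a c (Sum.inl ⟨(N, I, J), hv⟩)) 0 (fun y => lp.single 2 y (1:ℂ))
      = eD (N + a) (I + 1) (J + c) := by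
  show Option.elim (if h : validD (N + a, I + 1, J + c)
      then some (Sum.inr ⟨(N + a, I + 1, J + c), h⟩ : IdxW) else none) 0 _ = _
  rw [eD]
  split_ifs with h <;> simp

lemma gDU_elim (a c N I J : ℤ) (hv : validD (N, I, J)) :
    Option.elim (gDU a c (Sum.inr ⟨(N, I, J), hv⟩)) 0 (fun y => lp.single 2 y (1:ℂ))
      = eU (N + a) (I + 1) (J + c) := by
  show Option.elim (if h : validU (N + a, I + 1, J + c)
      then some (Sum.inl ⟨(N + a, I + 1, J + c), h⟩ : IdxW) else none) 0 _ = _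
  rw [eU]
  split_ifs with h <;> simp

lemma gDD_elim (a c N I J : ℤ) (hv : validD (N, I, J)) :
    Option.elim (gDD a c (Sum.inr ⟨(N, I, J), hv⟩)) 0 (fun y => lp.single 2 y (1:ℂ))
      = eD (N + a) (I + 1) (J + c) := by
  show Option.elim (if h : validD (N + a, I + 1, J + c)
      then some (Sum.inr ⟨(N + a, I + 1, J + c), h⟩ : IdxW) else none) 0 _ = _
  rw [eD]
  split_ifs with h <;> simp

lemma gUU_elim_inr (a c : ℤ) (s) :
    Option.elim (gUU a c (Sum.inr s)) 0 (fun y => lp.single 2 y (1:ℂ)) = 0 := rfl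
lemma gUD_elim_inr (a c : ℤ) (s) :
    Option.elim (gUD a c (Sum.inr s)) 0 (fun y => lp.single 2 y (1:ℂ)) = 0 := rfl
lemma gDU_elim_inl (a c : ℤ) (s) :
    Option.elim (gDU a c (Sum.inl s)) 0 (fun y => lp.single 2 y (1:ℂ)) = 0 := rfl
lemma gDD_elim_inl (a c : ℤ) (s) :
    Option.elim (gDD a c (Sum.inl s)) 0 (fun y => lp.single 2 y (1:ℂ)) = 0 := rfl

/-! ### the weights -/

def wUF (F : ℤ → ℤ → ℤ → ℝ) : IdxW → ℂ
  | Sum.inl ⟨(N, I, J), _⟩ => (F N I J : ℂ)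
  | Sum.inr _ => 0

def wDF (F : ℤ → ℤ → ℤ → ℝ) : IdxW → ℂ
  | Sum.inr ⟨(N, I, J), _⟩ => (F N I J : ℂ)
  | Sum.inl _ => 0

lemma wUF_inl (F : ℤ → ℤ → ℤ → ℝ) (N I J : ℤ) (h) :
    wUF F (Sum.inl ⟨(N, I, J), h⟩) = (F N I J : ℂ) := rfl
lemma wUF_inr (F : ℤ → ℤ → ℤ → ℝ) (s) : wUF F (Sum.inr s) = 0 := rfl
lemma wDF_inr (F : ℤ → ℤ → ℤ → ℝ) (N I J : ℤ) (h) :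
    wDF F (Sum.inr ⟨(N, I, J), h⟩) = (F N I J : ℂ) := rfl
lemma wDF_inl (F : ℤ → ℤ → ℤ → ℝ) (s) : wDF F (Sum.inl s) = 0 := rfl

lemma wUF_norm_le {F : ℤ → ℤ → ℤ → ℝ} {C : ℝ} (hC : 0 ≤ C)
    (hF : ∀ N I J : ℤ, validU (N, I, J) → |F N I J| ≤ C) : ∀ x, ‖wUF F x‖ ≤ C := by
  rintro (⟨⟨N, I, J⟩, hv⟩ | s)
  · rw [wUF_inl, Complex.norm_real, Real.norm_eq_abs]
    exact hF N I J hv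
  · rw [wUF_inr, norm_zero]; exact hC

lemma wDF_norm_le {F : ℤ → ℤ → ℤ → ℝ} {C : ℝ} (hC : 0 ≤ C)
    (hF : ∀ N I J : ℤ, validD (N, I, J) → |F N I J| ≤ C) : ∀ x, ‖wDF F x‖ ≤ C := by
  rintro (s | ⟨⟨N, I, J⟩, hv⟩)
  · rw [wDF_inl, norm_zero]; exact hC
  · rw [wDF_inr, Complex.norm_real, Real.norm_eq_abs]
    exact hF N I J hv
/-! ### zero entries -/

lemma aP01_zero (q n i j : ℝ) : aP q n i j 0 1 = 0 := by
  simp [aP, Matrix.smul_apply, smul_eq_mul]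
lemma aM10_zero (q n i j : ℝ) : aM q n i j 1 0 = 0 := by
  simp [aM, Matrix.smul_apply, smul_eq_mul]
lemma bP01_zero (q n i j : ℝ) : bP q n i j 0 1 = 0 := by
  simp [bP, Matrix.smul_apply, smul_eq_mul]
lemma bM10_zero (q n i j : ℝ) : bM q n i j 1 0 = 0 := by
  simp [bM, Matrix.smul_apply, smul_eq_mul]

/-! ### bounds on the twelve nonzero entries -/

section Bounds

variable {q : ℝ} (hq0 : 0 < q) (hq1 : q < 1)
include hq0 hq1

lemma aP00_bound {n i j : ℝ} (hn : 0 ≤ n) (hi1 : -n ≤ i) (hj1 : -n - 1/2 ≤ j) :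
    |aP q n i j 0 0| ≤ Cb q := by
  have he : aP q n i j 0 0 = (q ^ ((i + j - 1/2) / 2) * Real.sqrt (qnum q (n + i + 1))) *
      (q ^ (-n - 1/2) * Real.sqrt (qnum q (n + j + 3/2)) / qnum q (2*n + 2)) := by
    simp [aP, Matrix.smul_apply, smul_eq_mul]
  rw [he]
  exact master hq0 hq1 ((i + j - 1/2) / 2) (-n - 1/2) (n + i + 1) (n + j + 3/2) (2*n + 2) 1
    (by linarith) le_rfl (by linarith) rfl (by rw [qnum_one hq0 hq1, mul_one])

lemma aP10_bound {n i j : ℝ} (hn : 0 ≤ n) (hi1 : -n ≤ i) (hj1 : -n - 1/2 ≤ j) :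
    |aP q n i j 1 0| ≤ Cb q := by
  have he : aP q n i j 1 0 = (q ^ ((i + j - 1/2) / 2) * Real.sqrt (qnum q (n + i + 1))) *
      (q ^ ((1:ℝ)/2) * Real.sqrt (qnum q (n - j + 1/2)) / (qnum q (2*n + 1) * qnum q (2*n + 2))) := by
    simp [aP, Matrix.smul_apply, smul_eq_mul]
  rw [he]
  exact master hq0 hq1 ((i + j - 1/2) / 2) ((1:ℝ)/2) (n + i + 1) (n - j + 1/2) (2*n + 1) (2*n + 2)
    (by linarith) (by linarith) (by linarith) rfl rfl

lemma aM00_bound {n i j : ℝ} (hn : 0 ≤ n) (hi1 : -n ≤ i) (hj1 : -n - 1/2 ≤ j) :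
    |aM q n i j 0 0| ≤ Cb q := by
  have he : aM q n i j 0 0 = (q ^ ((i + j - 1/2) / 2) * Real.sqrt (qnum q (n - i))) *
      (q ^ (n + 1) * Real.sqrt (qnum q (n - j + 1/2)) / qnum q (2*n + 1)) := by
    simp [aM, Matrix.smul_apply, smul_eq_mul]
  rw [he]
  exact master hq0 hq1 ((i + j - 1/2) / 2) (n + 1) (n - i) (n - j + 1/2) (2*n + 1) 1
    (by linarith) le_rfl (by linarith) rfl (by rw [qnum_one hq0 hq1, mul_one])

lemma aP11_bound {n i j : ℝ} (hn : 1/2 ≤ n) (hi1 : -n ≤ i) (hj1 : -n + 1/2 ≤ j) :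
    |aP q n i j 1 1| ≤ Cb q := by
  have he : aP q n i j 1 1 = (q ^ ((i + j - 1/2) / 2) * Real.sqrt (qnum q (n + i + 1))) *
      (q ^ (-n) * Real.sqrt (qnum q (n + j + 1/2)) / qnum q (2*n + 1)) := by
    simp [aP, Matrix.smul_apply, smul_eq_mul]
  rw [he]
  exact master hq0 hq1 ((i + j - 1/2) / 2) (-n) (n + i + 1) (n + j + 1/2) (2*n + 1) 1
    (by linarith) le_rfl (by linarith) rfl (by rw [qnum_one hq0 hq1, mul_one])

lemma aM01_bound {n i j : ℝ} (hn : 1/2 ≤ n) (hi1 : -n ≤ i) (hj1 : -n + 1/2 ≤ j) :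
    |aM q n i j 0 1| ≤ Cb q := by
  have he : aM q n i j 0 1 = (q ^ ((i + j - 1/2) / 2) * Real.sqrt (qnum q (n - i))) *
      -(q ^ ((1:ℝ)/2) * Real.sqrt (qnum q (n + j + 1/2)) / (qnum q (2*n) * qnum q (2*n + 1))) := by
    simp [aM, Matrix.smul_apply, smul_eq_mul]
  rw [he, mul_neg, abs_neg]
  exact master hq0 hq1 ((i + j - 1/2) / 2) ((1:ℝ)/2) (n - i) (n + j + 1/2) (2*n) (2*n + 1)
    (by linarith) (by linarith) (by linarith) rfl rfl

lemma aM11_bound {n i j : ℝ} (hn : 1/2 ≤ n) (hi1 : -n ≤ i) (hj1 : -n + 1/2 ≤ j) :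
    |aM q n i j 1 1| ≤ Cb q := by
  have he : aM q n i j 1 1 = (q ^ ((i + j - 1/2) / 2) * Real.sqrt (qnum q (n - i))) *
      (q ^ (n + 1/2) * Real.sqrt (qnum q (n - j - 1/2)) / qnum q (2*n)) := by
    simp [aM, Matrix.smul_apply, smul_eq_mul]
  rw [he]
  exact master hq0 hq1 ((i + j - 1/2) / 2) (n + 1/2) (n - i) (n - j - 1/2) (2*n) 1
    (by linarith) le_rfl (by linarith) rfl (by rw [qnum_one hq0 hq1, mul_one])

lemma bP00_bound {n i j : ℝ} (hn : 0 ≤ n) (hi1 : -n ≤ i) (hj1 : -n - 1/2 ≤ j) :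
    |bP q n i j 0 0| ≤ Cb q := by
  have he : bP q n i j 0 0 = (q ^ ((i + j - 1/2) / 2) * Real.sqrt (qnum q (n + i + 1))) *
      (Real.sqrt (qnum q (n - j + 3/2)) / qnum q (2*n + 2)) := by
    simp [bP, Matrix.smul_apply, smul_eq_mul]
  rw [he]
  exact master hq0 hq1 ((i + j - 1/2) / 2) 0 (n + i + 1) (n - j + 3/2) (2*n + 2) 1
    (by linarith) le_rfl (by linarith) rfl
    (by rw [Real.rpow_zero, one_mul, qnum_one hq0 hq1, mul_one])

lemma bP10_bound {n i j : ℝ} (hn : 0 ≤ n) (hi1 : -n ≤ i) (hj1 : -n - 1/2 ≤ j) :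
    |bP q n i j 1 0| ≤ Cb q := by
  have he : bP q n i j 1 0 = (q ^ ((i + j - 1/2) / 2) * Real.sqrt (qnum q (n + i + 1))) *
      -(q ^ (-n - 1) * Real.sqrt (qnum q (n + j + 1/2)) / (qnum q (2*n + 1) * qnum q (2*n + 2))) := by
    simp [bP, Matrix.smul_apply, smul_eq_mul]
  rw [he, mul_neg, abs_neg]
  exact master hq0 hq1 ((i + j - 1/2) / 2) (-n - 1) (n + i + 1) (n + j + 1/2) (2*n + 1) (2*n + 2)
    (by linarith) (by linarith) (by linarith) rfl rfl

lemma bM00_bound {n i j : ℝ} (hn : 0 ≤ n) (hi1 : -n ≤ i) (hj1 : -n - 1/2 ≤ j) :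
    |bM q n i j 0 0| ≤ Cb q := by
  have he : bM q n i j 0 0 = (q ^ ((i + j - 1/2) / 2) * Real.sqrt (qnum q (n - i))) *
      -(q ^ (-(1:ℝ)/2) * Real.sqrt (qnum q (n + j + 1/2)) / qnum q (2*n + 1)) := by
    simp [bM, Matrix.smul_apply, smul_eq_mul]
  rw [he, mul_neg, abs_neg]
  exact master hq0 hq1 ((i + j - 1/2) / 2) (-(1:ℝ)/2) (n - i) (n + j + 1/2) (2*n + 1) 1
    (by linarith) le_rfl (by linarith) rfl (by rw [qnum_one hq0 hq1, mul_one])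

lemma bP11_bound {n i j : ℝ} (hn : 1/2 ≤ n) (hi1 : -n ≤ i) (hj1 : -n + 1/2 ≤ j) :
    |bP q n i j 1 1| ≤ Cb q := by
  have he : bP q n i j 1 1 = (q ^ ((i + j - 1/2) / 2) * Real.sqrt (qnum q (n + i + 1))) *
      (q ^ (-(1:ℝ)/2) * Real.sqrt (qnum q (n - j + 1/2)) / qnum q (2*n + 1)) := by
    simp [bP, Matrix.smul_apply, smul_eq_mul]
  rw [he]
  exact master hq0 hq1 ((i + j - 1/2) / 2) (-(1:ℝ)/2) (n + i + 1) (n - j + 1/2) (2*n + 1) 1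
    (by linarith) le_rfl (by linarith) rfl (by rw [qnum_one hq0 hq1, mul_one])

lemma bM01_bound {n i j : ℝ} (hn : 1/2 ≤ n) (hi1 : -n ≤ i) (hj1 : -n + 1/2 ≤ j) :
    |bM q n i j 0 1| ≤ Cb q := by
  have he : bM q n i j 0 1 = (q ^ ((i + j - 1/2) / 2) * Real.sqrt (qnum q (n - i))) *
      -(q ^ n * Real.sqrt (qnum q (n - j + 1/2)) / (qnum q (2*n) * qnum q (2*n + 1))) := by
    simp [bM, Matrix.smul_apply, smul_eq_mul]
  rw [he, mul_neg, abs_neg]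
  exact master hq0 hq1 ((i + j - 1/2) / 2) n (n - i) (n - j + 1/2) (2*n) (2*n + 1)
    (by linarith) (by linarith) (by linarith) rfl rfl

lemma bM11_bound {n i j : ℝ} (hn : 1/2 ≤ n) (hi1 : -n ≤ i) (hj1 : -n + 1/2 ≤ j) :
    |bM q n i j 1 1| ≤ Cb q := by
  have he : bM q n i j 1 1 = (q ^ ((i + j - 1/2) / 2) * Real.sqrt (qnum q (n - i))) *
      -(Real.sqrt (qnum q (n + j - 1/2)) / qnum q (2*n)) := by
    simp [bM, Matrix.smul_apply, smul_eq_mul]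
  rw [he, mul_neg, abs_neg]
  exact master hq0 hq1 ((i + j - 1/2) / 2) 0 (n - i) (n + j - 1/2) (2*n) 1
    (by linarith) le_rfl (by linarith) rfl
    (by rw [Real.rpow_zero, one_mul, qnum_one hq0 hq1, mul_one])

end Bounds
/-! ### the operators -/

def Aop {q : ℝ} (hq0 : 0 < q) (hq1 : q < 1) : Wsp →L[ℂ] Wsp :=
  ShiftOp (wUF fun N I J => aP q (nn N) (nn I) (nn J) 0 0) (gUU 1 1) (Cb_pos hq0 hq1).le
    (wUF_norm_le (Cb_pos hq0 hq1).le fun N I J h => by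
      obtain ⟨h1, h2, h3, h4, h5⟩ := validU_real h
      exact aP00_bound hq0 hq1 h1 h2 h4)
  + ShiftOp (wUF fun N I J => aP q (nn N) (nn I) (nn J) 1 0) (gUD 1 1) (Cb_pos hq0 hq1).le
    (wUF_norm_le (Cb_pos hq0 hq1).le fun N I J h => by
      obtain ⟨h1, h2, h3, h4, h5⟩ := validU_real h
      exact aP10_bound hq0 hq1 h1 h2 h4)
  + ShiftOp (wUF fun N I J => aM q (nn N) (nn I) (nn J) 0 0) (gUU (-1) 1) (Cb_pos hq0 hq1).le
    (wUF_norm_le (Cb_pos hq0 hq1).le fun N I J h => by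
      obtain ⟨h1, h2, h3, h4, h5⟩ := validU_real h
      exact aM00_bound hq0 hq1 h1 h2 h4)
  + ShiftOp (wDF fun N I J => aP q (nn N) (nn I) (nn J) 1 1) (gDD 1 1) (Cb_pos hq0 hq1).le
    (wDF_norm_le (Cb_pos hq0 hq1).le fun N I J h => by
      obtain ⟨h1, h2, h3, h4, h5⟩ := validD_real h
      exact aP11_bound hq0 hq1 h1 h2 h4)
  + ShiftOp (wDF fun N I J => aM q (nn N) (nn I) (nn J) 0 1) (gDU (-1) 1) (Cb_pos hq0 hq1).le
    (wDF_norm_le (Cb_pos hq0 hq1).le fun N I J h => by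
      obtain ⟨h1, h2, h3, h4, h5⟩ := validD_real h
      exact aM01_bound hq0 hq1 h1 h2 h4)
  + ShiftOp (wDF fun N I J => aM q (nn N) (nn I) (nn J) 1 1) (gDD (-1) 1) (Cb_pos hq0 hq1).le
    (wDF_norm_le (Cb_pos hq0 hq1).le fun N I J h => by
      obtain ⟨h1, h2, h3, h4, h5⟩ := validD_real h
      exact aM11_bound hq0 hq1 h1 h2 h4)

def Bop {q : ℝ} (hq0 : 0 < q) (hq1 : q < 1) : Wsp →L[ℂ] Wsp :=
  ShiftOp (wUF fun N I J => -(bP q (nn N) (nn I) (nn J) 0 0)) (gUU 1 (-1)) (Cb_pos hq0 hq1).le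
    (wUF_norm_le (Cb_pos hq0 hq1).le fun N I J h => by
      obtain ⟨h1, h2, h3, h4, h5⟩ := validU_real h
      rw [abs_neg]; exact bP00_bound hq0 hq1 h1 h2 h4)
  + ShiftOp (wUF fun N I J => -(bP q (nn N) (nn I) (nn J) 1 0)) (gUD 1 (-1)) (Cb_pos hq0 hq1).le
    (wUF_norm_le (Cb_pos hq0 hq1).le fun N I J h => by
      obtain ⟨h1, h2, h3, h4, h5⟩ := validU_real h
      rw [abs_neg]; exact bP10_bound hq0 hq1 h1 h2 h4)
  + ShiftOp (wUF fun N I J => -(bM q (nn N) (nn I) (nn J) 0 0)) (gUU (-1) (-1)) (Cb_pos hq0 hq1).le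
    (wUF_norm_le (Cb_pos hq0 hq1).le fun N I J h => by
      obtain ⟨h1, h2, h3, h4, h5⟩ := validU_real h
      rw [abs_neg]; exact bM00_bound hq0 hq1 h1 h2 h4)
  + ShiftOp (wDF fun N I J => -(bP q (nn N) (nn I) (nn J) 1 1)) (gDD 1 (-1)) (Cb_pos hq0 hq1).le
    (wDF_norm_le (Cb_pos hq0 hq1).le fun N I J h => by
      obtain ⟨h1, h2, h3, h4, h5⟩ := validD_real h
      rw [abs_neg]; exact bP11_bound hq0 hq1 h1 h2 h4)
  + ShiftOp (wDF fun N I J => -(bM q (nn N) (nn I) (nn J) 0 1)) (gDU (-1) (-1)) (Cb_pos hq0 hq1).le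
    (wDF_norm_le (Cb_pos hq0 hq1).le fun N I J h => by
      obtain ⟨h1, h2, h3, h4, h5⟩ := validD_real h
      rw [abs_neg]; exact bM01_bound hq0 hq1 h1 h2 h4)
  + ShiftOp (wDF fun N I J => -(bM q (nn N) (nn I) (nn J) 1 1)) (gDD (-1) (-1)) (Cb_pos hq0 hq1).le
    (wDF_norm_le (Cb_pos hq0 hq1).le fun N I J h => by
      obtain ⟨h1, h2, h3, h4, h5⟩ := validD_real h
      rw [abs_neg]; exact bM11_bound hq0 hq1 h1 h2 h4)
/-- The operators `π'(α*)` and `π'(β)`, defined on the algebraic span of the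
basis of `𝓗` by the explicit formulas involving the matrices `a±_{nij}` and `b±_{nij}`, extend
to bounded operators on `𝓗`. -/
theorem piAlphaStar_piBeta_bounded (q : ℝ) (hq0 : 0 < q) (hq1 : q < 1) :
    ∃ A B : Wsp →L[ℂ] Wsp, IsPiAlphaStar q A ∧ IsPiBeta q B := by
  refine ⟨Aop hq0 hq1, Bop hq0 hq1, ⟨?_, ?_⟩, ⟨?_, ?_⟩⟩
  · intro N I J h
    have e1 : eU N I J = lp.single 2 (Sum.inl ⟨(N, I, J), h⟩ : IdxW) 1 := by
      rw [eU, dif_pos h]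
    rw [e1]
    simp only [Aop, ContinuousLinearMap.add_apply]
    rw [ShiftOp_single _ _ _ _ (gUU_inj 1 1), ShiftOp_single _ _ _ _ (gUD_inj 1 1),
      ShiftOp_single _ _ _ _ (gUU_inj (-1) 1), ShiftOp_single _ _ _ _ (gDD_inj 1 1),
      ShiftOp_single _ _ _ _ (gDU_inj (-1) 1), ShiftOp_single _ _ _ _ (gDD_inj (-1) 1)]
    rw [wUF_inl, wUF_inl, wUF_inl, wDF_inl, wDF_inl, wDF_inl,
      gUU_elim, gUD_elim, gUU_elim]
    rw [aM10_zero, Complex.ofReal_zero]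
    rw [show (N + (-1:ℤ)) = N - 1 from by ring]
    simp only [zero_smul, add_zero, smul_zero]
  · intro N I J h
    have e1 : eD N I J = lp.single 2 (Sum.inr ⟨(N, I, J), h⟩ : IdxW) 1 := by
      rw [eD, dif_pos h]
    rw [e1]
    simp only [Aop, ContinuousLinearMap.add_apply]
    rw [ShiftOp_single _ _ _ _ (gUU_inj 1 1), ShiftOp_single _ _ _ _ (gUD_inj 1 1),
      ShiftOp_single _ _ _ _ (gUU_inj (-1) 1), ShiftOp_single _ _ _ _ (gDD_inj 1 1),
      ShiftOp_single _ _ _ _ (gDU_inj (-1) 1), ShiftOp_single _ _ _ _ (gDD_inj (-1) 1)]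
    rw [wUF_inr, wUF_inr, wUF_inr, wDF_inr, wDF_inr, wDF_inr,
      gDD_elim, gDU_elim, gDD_elim]
    rw [aP01_zero, Complex.ofReal_zero]
    rw [show (N + (-1:ℤ)) = N - 1 from by ring]
    simp only [zero_smul, add_zero, smul_zero, zero_add]
  · intro N I J h
    have e1 : eU N I J = lp.single 2 (Sum.inl ⟨(N, I, J), h⟩ : IdxW) 1 := by
      rw [eU, dif_pos h]
    rw [e1]
    simp only [Bop, ContinuousLinearMap.add_apply]
    rw [ShiftOp_single _ _ _ _ (gUU_inj 1 (-1)), ShiftOp_single _ _ _ _ (gUD_inj 1 (-1)),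
      ShiftOp_single _ _ _ _ (gUU_inj (-1) (-1)), ShiftOp_single _ _ _ _ (gDD_inj 1 (-1)),
      ShiftOp_single _ _ _ _ (gDU_inj (-1) (-1)), ShiftOp_single _ _ _ _ (gDD_inj (-1) (-1))]
    rw [wUF_inl, wUF_inl, wUF_inl, wDF_inl, wDF_inl, wDF_inl,
      gUU_elim, gUD_elim, gUU_elim]
    simp only [Complex.ofReal_neg]
    rw [bM10_zero, Complex.ofReal_zero, neg_zero]
    rw [show (N + (-1:ℤ)) = N - 1 from by ring, show (J + (-1:ℤ)) = J - 1 from by ring]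
    simp only [zero_smul, add_zero, smul_zero]
  · intro N I J h
    have e1 : eD N I J = lp.single 2 (Sum.inr ⟨(N, I, J), h⟩ : IdxW) 1 := by
      rw [eD, dif_pos h]
    rw [e1]
    simp only [Bop, ContinuousLinearMap.add_apply]
    rw [ShiftOp_single _ _ _ _ (gUU_inj 1 (-1)), ShiftOp_single _ _ _ _ (gUD_inj 1 (-1)),
      ShiftOp_single _ _ _ _ (gUU_inj (-1) (-1)), ShiftOp_single _ _ _ _ (gDD_inj 1 (-1)),
      ShiftOp_single _ _ _ _ (gDU_inj (-1) (-1)), ShiftOp_single _ _ _ _ (gDD_inj (-1) (-1))]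
    rw [wUF_inr, wUF_inr, wUF_inr, wDF_inr, wDF_inr, wDF_inr,
      gDD_elim, gDU_elim, gDD_elim]
    simp only [Complex.ofReal_neg]
    rw [bP01_zero, Complex.ofReal_zero, neg_zero]
    rw [show (N + (-1:ℤ)) = N - 1 from by ring, show (J + (-1:ℤ)) = J - 1 from by ring]
    simp only [zero_smul, add_zero, smul_zero, zero_add]
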